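/- arXiv:1601.00042 — 2 statements merged into one kernel-verified Lean document; each statement's English description precedes it below -/
import Mathlib

section
/- Fix T > 0 such that Φ_v(T) is invertible, write Φ = exp(T·A) and G(T) = Φ_v(T)·Φ_v(T)ᵀ, and let J̄ > 0. Then for all x₀, x_f ∈ ℝ⁶: (i) if (x_f − Φ·x₀)ᵀ·G(T)⁻¹·(x_f − Φ·x₀) ≤ J̄²/2, then J_T(x₀, x_f) ≤ J̄; and (ii) if J_T(x₀, x_f) ≤ J̄, then (x_f − Φ·x₀)ᵀ·G(T)⁻¹·(x_f − Φ·x₀) ≤ J̄². That is, for fixed maneuver duration the set of states reachable from x₀ with steering cost at most J̄ contains the ellipsoid {x_f : (x_f − Φx₀)ᵀ G(T)⁻¹ (x_f − Φx₀) ≤ J̄²/2} and is contained in the ellipsoid {x_f : (x_f − Φx₀)ᵀ G(T)⁻¹ (x_f − Φx₀) ≤ J̄²}. -/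
noncomputable section

/-- Euclidean norm of a finite real vector. -/
def enorm {m : ℕ} (v : Fin m → ℝ) : ℝ := Real.sqrt (∑ i, v i ^ 2)

/-- The CWH dynamics matrix. -/
def cwhA (ω : ℝ) : Matrix (Fin 6) (Fin 6) ℝ :=
  !![0, 0, 0, 1, 0, 0;
     0, 0, 0, 0, 1, 0;
     0, 0, 0, 0, 0, 1;
     3*ω^2, 0, 0, 0, 2*ω, 0;
     0, 0, 0, -2*ω, 0, 0;
     0, 0, -ω^2, 0, 0, 0]

/-- The CWH input matrix `B = [0; I₃]`. -/
def cwhB : Matrix (Fin 6) (Fin 3) ℝ :=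
  !![0, 0, 0;
     0, 0, 0;
     0, 0, 0;
     1, 0, 0;
     0, 1, 0;
     0, 0, 1]

/-- State transition matrix `exp(t A)`. -/
def expm (ω t : ℝ) : Matrix (Fin 6) (Fin 6) ℝ := NormedSpace.exp (t • cwhA ω)

/-- Horizontal concatenation of two `6 × 3` blocks into a `6 × 6` matrix. -/
def blockCat (M N : Matrix (Fin 6) (Fin 3) ℝ) : Matrix (Fin 6) (Fin 6) ℝ :=
  Matrix.of fun i j => if h : (j : ℕ) < 3 then M i ⟨j, h⟩ else N i ⟨(j : ℕ) - 3, by omega⟩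

/-- The aggregated impulse matrix `Φ_v(T) = [exp(T A) B  B]`. -/
def Phiv (ω T : ℝ) : Matrix (Fin 6) (Fin 6) ℝ := blockCat (expm ω T * cwhB) cwhB

/-- The two-impulse Gramian `G(T) = Φ_v(T) Φ_v(T)ᵀ`. -/
def gram (ω T : ℝ) : Matrix (Fin 6) (Fin 6) ℝ := Phiv ω T * (Phiv ω T).transpose

/-- First three components of a 6-vector. -/
def first3 (v : Fin 6 → ℝ) : Fin 3 → ℝ := fun i => v ⟨(i : ℕ), by omega⟩

/-- Last three components of a 6-vector. -/
def last3 (v : Fin 6 → ℝ) : Fin 3 → ℝ := fun i => v ⟨(i : ℕ) + 3, by omega⟩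

/-- The stacked two-impulse steering solution. -/
def dVsteer (ω T : ℝ) (x₀ xf : Fin 6 → ℝ) : Fin 6 → ℝ :=
  (Phiv ω T)⁻¹.mulVec (xf - (expm ω T).mulVec x₀)

/-- The fixed-duration two-impulse steering cost `J_T(x₀, x_f)`. -/
def Jfix (ω T : ℝ) (x₀ xf : Fin 6 → ℝ) : ℝ :=
  _root_.enorm (first3 (dVsteer ω T x₀ xf)) + _root_.enorm (last3 (dVsteer ω T x₀ xf))

/-- Euclidean operator norm of a `6 × 6` real matrix. -/
def opNorm (M : Matrix (Fin 6) (Fin 6) ℝ) : ℝ :=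
  ‖(Matrix.toEuclideanCLM (𝕜 := ℝ) M : EuclideanSpace ℝ (Fin 6) →L[ℝ] EuclideanSpace ℝ (Fin 6))‖

/-- **Ellipsoidal bounds on the fixed-duration fuel-reachability set.**
With `Φ = exp(T A)`, `G(T) = Φ_v(T) Φ_v(T)ᵀ` and `J̄ > 0`:
(i) `(x_f − Φ x₀)ᵀ G(T)⁻¹ (x_f − Φ x₀) ≤ J̄²/2` implies `J_T(x₀, x_f) ≤ J̄`; and
(ii) `J_T(x₀, x_f) ≤ J̄` implies `(x_f − Φ x₀)ᵀ G(T)⁻¹ (x_f − Φ x₀) ≤ J̄²`. -/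
theorem reachability_ellipsoid_bounds (ω : ℝ) (hω : 0 < ω) (T : ℝ) (hT : 0 < T)
    (hinv : IsUnit (Phiv ω T)) (Jbar : ℝ) (hJbar : 0 < Jbar) :
    ∀ x₀ xf : Fin 6 → ℝ,
      (dotProduct (xf - (expm ω T).mulVec x₀)
          ((gram ω T)⁻¹.mulVec (xf - (expm ω T).mulVec x₀)) ≤ Jbar ^ 2 / 2 →
        Jfix ω T x₀ xf ≤ Jbar) ∧
      (Jfix ω T x₀ xf ≤ Jbar →
        dotProduct (xf - (expm ω T).mulVec x₀)
          ((gram ω T)⁻¹.mulVec (xf - (expm ω T).mulVec x₀)) ≤ Jbar ^ 2) := by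
  intro x₀ xf
  set y := xf - (expm ω T).mulVec x₀ with hy
  set dV := dVsteer ω T x₀ xf with hdV
  have hQ : dotProduct y ((gram ω T)⁻¹.mulVec y) = dotProduct dV dV := by
    have h1 : (gram ω T)⁻¹ = ((Phiv ω T)⁻¹).transpose * (Phiv ω T)⁻¹ := by
      rw [gram, Matrix.mul_inv_rev, Matrix.transpose_nonsing_inv]
    rw [h1, ← Matrix.mulVec_mulVec, Matrix.dotProduct_mulVec, Matrix.vecMul_transpose]
    rfl
  set a := _root_.enorm (first3 dV) with hadef
  set b := _root_.enorm (last3 dV) with hbdef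
  have ha : 0 ≤ a := Real.sqrt_nonneg _
  have hb : 0 ≤ b := Real.sqrt_nonneg _
  have ha2 : a ^ 2 = ∑ i, first3 dV i ^ 2 := Real.sq_sqrt (by positivity)
  have hb2 : b ^ 2 = ∑ i, last3 dV i ^ 2 := Real.sq_sqrt (by positivity)
  have hsplit : dotProduct dV dV = a ^ 2 + b ^ 2 := by
    rw [ha2, hb2]
    simp only [dotProduct, Fin.sum_univ_six, Fin.sum_univ_three, first3, last3]
    norm_num
    have h2 : (⟨2, by omega⟩ : Fin 6) = 2 := rfl
    have h3 : (⟨3, by omega⟩ : Fin 6) = 3 := rfl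
    have h4 : (⟨4, by omega⟩ : Fin 6) = 4 := rfl
    have h5 : (⟨5, by omega⟩ : Fin 6) = 5 := rfl
    rw [h2, h3, h4, h5]
    ring
  have hJ : Jfix ω T x₀ xf = a + b := rfl
  rw [hJ, hQ, hsplit]
  constructor
  · intro h
    nlinarith [sq_nonneg (a - b), sq_nonneg (a + b)]
  · intro h
    nlinarith [mul_nonneg ha hb]


end
end

section
/- Let t_init ∈ ℝ, let τ₁ ≤ … ≤ τ_N be burn times, let x_init ∈ ℝ⁶ and ΔVᵢ ∈ ℝ³ for i = 1, …, N, and define x(t) = exp((t − t_init)·A)·x_init + Σ_{i : τᵢ ≤ t} exp((t − τᵢ)·A)·B·ΔVᵢ. Then at every time t ∉ {τ₁, …, τ_N}, the function x is differentiable with derivative x′(t) = A·x(t); that is, the impulsive solution formula satisfies the CWH coasting dynamics ẋ = A·x away from the burn times. -/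
noncomputable section

open scoped Classical in
/-- The impulsive CWH trajectory from `x₀` at time `t₀` with burns `V i` at times `τ i`:
`x(t) = exp((t − t₀) A) x₀ + Σ_{i : τ i ≤ t} exp((t − τ i) A) B (V i)`. -/
def impulsiveTraj (ω t₀ : ℝ) (x₀ : Fin 6 → ℝ) {N : ℕ} (τ : Fin N → ℝ)
    (V : Fin N → Fin 3 → ℝ) (t : ℝ) : Fin 6 → ℝ :=
  (expm ω (t - t₀)).mulVec x₀ +
    ∑ i ∈ Finset.univ.filter (fun i => τ i ≤ t),
      (expm ω (t - τ i)).mulVec (cwhB.mulVec (V i))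

attribute [local instance] Matrix.linftyOpNormedRing Matrix.linftyOpNormedAlgebra

/-- `M ↦ M.mulVec v` as a continuous linear map. -/
def mulVecCLM (v : Fin 6 → ℝ) : Matrix (Fin 6) (Fin 6) ℝ →L[ℝ] (Fin 6 → ℝ) :=
  LinearMap.toContinuousLinearMap
    { toFun := fun M => M.mulVec v
      map_add' := fun M N => Matrix.add_mulVec M N v
      map_smul' := fun r M => Matrix.smul_mulVec r M v }

lemma hasDerivAt_expm_mulVec (ω c : ℝ) (v : Fin 6 → ℝ) (t : ℝ) :
    HasDerivAt (fun s => (expm ω (s - c)).mulVec v)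
      ((cwhA ω).mulVec ((expm ω (t - c)).mulVec v)) t := by
  have h1 : HasDerivAt (fun u : ℝ => NormedSpace.exp (u • cwhA ω))
      (cwhA ω * NormedSpace.exp ((t - c) • cwhA ω)) (t - c) :=
    hasDerivAt_exp_smul_const' (cwhA ω) (t - c)
  have h2 : HasDerivAt (fun s : ℝ => s - c) 1 t := (hasDerivAt_id t).sub_const c
  have h3 := HasDerivAt.scomp t h1 h2
  simp only [one_smul] at h3
  have h4 := (mulVecCLM v).hasFDerivAt.comp_hasDerivAt t h3
  have h5 : (mulVecCLM v) (cwhA ω * NormedSpace.exp ((t - c) • cwhA ω)) =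
      (cwhA ω).mulVec ((expm ω (t - c)).mulVec v) := by
    show (cwhA ω * NormedSpace.exp ((t - c) • cwhA ω)).mulVec v = _
    rw [expm, ← Matrix.mulVec_mulVec]
  replace h4 := h4.congr_deriv h5
  exact h4.congr_deriv rfl

/-- **The impulsive solution satisfies the coasting dynamics away from burn times.**
At every time `t` that is not one of the burn times, the impulsive CWH trajectory is
differentiable with derivative `x′(t) = A x(t)`. -/
theorem impulsiveTraj_hasDerivAt (ω : ℝ) (hω : 0 < ω) (t_init : ℝ) (N : ℕ)
    (τ : Fin N → ℝ) (hτ : Monotone τ) (x_init : Fin 6 → ℝ) (V : Fin N → Fin 3 → ℝ) :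
    ∀ t : ℝ, (∀ i, t ≠ τ i) →
      HasDerivAt (impulsiveTraj ω t_init x_init τ V)
        ((cwhA ω).mulVec (impulsiveTraj ω t_init x_init τ V t)) t := by
  classical
  intro t ht
  set F : Finset (Fin N) := Finset.univ.filter (fun i => τ i ≤ t) with hF
  set g : ℝ → Fin 6 → ℝ := fun s =>
    (expm ω (s - t_init)).mulVec x_init +
      ∑ i ∈ F, (expm ω (s - τ i)).mulVec (cwhB.mulVec (V i)) with hg
  have hev : ∀ᶠ s in nhds t, ∀ i, (τ i ≤ s ↔ τ i ≤ t) := by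
    rw [Filter.eventually_all]
    intro i
    rcases lt_or_gt_of_ne (ht i) with h | h
    · filter_upwards [eventually_lt_nhds h] with s hs
      simp [not_le.mpr hs, not_le.mpr h]
    · filter_upwards [eventually_gt_nhds h] with s hs
      simp [hs.le, h.le]
  have heq : ∀ᶠ s in nhds t, impulsiveTraj ω t_init x_init τ V s = g s := by
    filter_upwards [hev] with s hs
    simp only [impulsiveTraj, hg, hF]
    congr 1
    apply Finset.sum_congr
    · ext i; simp [hs i]
    · intros; rfl
  have hgd : HasDerivAt g ((cwhA ω).mulVec (g t)) t := by
    have hsum : HasDerivAt (fun s => ∑ i ∈ F, (expm ω (s - τ i)).mulVec (cwhB.mulVec (V i)))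
        (∑ i ∈ F, (cwhA ω).mulVec ((expm ω (t - τ i)).mulVec (cwhB.mulVec (V i)))) t :=
      HasDerivAt.fun_sum (fun i _ => hasDerivAt_expm_mulVec ω (τ i) (cwhB.mulVec (V i)) t)
    have := (hasDerivAt_expm_mulVec ω t_init x_init t).add hsum
    refine this.congr_deriv ?_
    symm
    show (cwhA ω).mulVecLin (g t) = _
    simp only [hg, map_add, map_sum]
    rfl
  have htg : impulsiveTraj ω t_init x_init τ V t = g t := heq.self_of_nhds
  rw [htg]
  exact hgd.congr_of_eventuallyEq heq

end
end
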